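/- Let A be a k-uniform hypergraph, α ≥ 0 and U ⊆ V(A). Suppose that among all subsets U ⊆ I' ⊊ V(A) with ρ_{A,I'} ≤ α, the set I has maximal size. Then the template (A, I) is strictly balanced, i.e., ρ_{B,I} < ρ_{A,I} for every subtemplate (B, I) ⊆ (A, I) with V(B) ≠ I and B ≠ A. -/

import Mathlib

open Finset

/-- The vertex set (support) of a hypergraph given by its edge set. -/
def verts (A : Finset (Finset ℕ)) : Finset ℕ := A.sup id

/-- The edge set of the induced subhypergraph `A[U]`. -/
def ind (A : Finset (Finset ℕ)) (U : Finset ℕ) : Finset (Finset ℕ) := A.filter (· ⊆ U)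

/-- The density of the template `(A[U], I)`, where `A[U]` carries the vertex set `U`:
`(e(A[U]) - e(A[I])) / (|U| - |I|)`, and `0` if `U = I`. -/
def dens (A : Finset (Finset ℕ)) (U I : Finset ℕ) : ℚ :=
  if U = I then 0
  else (((ind A U).card : ℚ) - ((ind A I).card : ℚ)) / ((U.card : ℚ) - (I.card : ℚ))

/-- The density `ρ_{A,I}` of the template `(A, I)` (whose vertex set is `verts A ∪ I`). -/
def tdens (A : Finset (Finset ℕ)) (I : Finset ℕ) : ℚ := dens A (verts A ∪ I) I

/-- The `k`-density `ρ_A = (e(A) - 1)/(v(A) - k)` of a `k`-uniform hypergraph. -/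
def kdens (k : ℕ) (A : Finset (Finset ℕ)) : ℚ :=
  ((A.card : ℚ) - 1) / (((verts A).card : ℚ) - (k : ℚ))

/-- The template `(A, I)` is strictly balanced: every proper subtemplate `(B, I) ⊆ (A, I)`
(`B = A[U]` with vertex set `U`, `I ⊆ U`, `V(B) = U ≠ I`, `B ≠ A`) has strictly smaller
density. -/
def StrictBalT (A : Finset (Finset ℕ)) (I : Finset ℕ) : Prop :=
  ∀ U : Finset ℕ, I ⊆ U → U ⊂ verts A ∪ I → U ≠ I → dens A U I < tdens A I

/-- if, among all sets `I'` with `U ⊆ I' ⊊ V(A)` and `ρ_{A,I'} ≤ α`, the set `I`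
has maximal size, then the template `(A, I)` is strictly balanced. -/
theorem extension_is_strictly_balanced
    (k : ℕ) (hk : 2 ≤ k)
    (A : Finset (Finset ℕ)) (hA : ∀ e ∈ A, e.card = k)
    (α : ℚ) (hα : 0 ≤ α)
    (U I : Finset ℕ) (hUI : U ⊆ I) (hIV : I ⊂ verts A)
    (hIα : tdens A I ≤ α)
    (hImax : ∀ I' : Finset ℕ, U ⊆ I' → I' ⊂ verts A → tdens A I' ≤ α → I'.card ≤ I.card) :
    StrictBalT A I := by
  intro W hIW hWsub hWI
  by_contra hcon
  push_neg at hcon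
  have hIV' : I ⊆ verts A := hIV.subset
  have hUnI : verts A ∪ I = verts A := union_eq_left.mpr hIV'
  have hW' : W ⊂ verts A := by rwa [hUnI] at hWsub
  have hUnW : verts A ∪ W = verts A := union_eq_left.mpr hW'.subset
  have hIWs : I ⊂ W := ssubset_of_subset_of_ne hIW (Ne.symm hWI)
  have hcI : I.card < W.card := card_lt_card hIWs
  have hcW : W.card < (verts A).card := card_lt_card hW'
  set eI : ℚ := ((ind A I).card : ℚ)
  set eW : ℚ := ((ind A W).card : ℚ)
  set eV : ℚ := ((ind A (verts A)).card : ℚ)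
  set a : ℚ := eW - eI with ha
  set b : ℚ := eV - eW with hb
  set c : ℚ := (W.card : ℚ) - (I.card : ℚ) with hcdef
  set d : ℚ := ((verts A).card : ℚ) - (W.card : ℚ) with hddef
  have hc : 0 < c := by
    have : (I.card : ℚ) < (W.card : ℚ) := by exact_mod_cast hcI
    simpa [hcdef] using sub_pos.mpr this
  have hd : 0 < d := by
    have : (W.card : ℚ) < ((verts A).card : ℚ) := by exact_mod_cast hcW
    simpa [hddef] using sub_pos.mpr this
  have hcd : 0 < c + d := by linarith
  have hdWI : dens A W I = a / c := by
    simp only [_root_.dens, if_neg hWI]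
    rfl
  have htI : tdens A I = (a + b) / (c + d) := by
    rw [tdens, hUnI]
    simp only [_root_.dens, if_neg hIV.ne']
    have h1 : eV - eI = a + b := by ring
    have h2 : ((verts A).card : ℚ) - (I.card : ℚ) = c + d := by ring
    rw [h1, h2]
  have htW : tdens A W = b / d := by
    rw [tdens, hUnW]
    simp only [_root_.dens, if_neg hW'.ne']
    rfl
  rw [htI, hdWI] at hcon
  have key : b / d ≤ (a + b) / (c + d) := by
    rw [div_le_div_iff₀ hcd hc] at hcon
    rw [div_le_div_iff₀ hd hcd]
    nlinarith
  have hWα : tdens A W ≤ α := by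
    rw [htW]
    calc b / d ≤ (a + b) / (c + d) := key
      _ = tdens A I := htI.symm
      _ ≤ α := hIα
  have := hImax W (hUI.trans hIW) hW' hWα
  omega
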